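/- Let (P,⪯₊,⪯₋) be any double poset. Then for every integer k ≥ 0, the number of lattice points of the k-th dilate of the reduced double chain polytope satisfies |k·(C(P,⪯₊) − C(P,⪯₋)) ∩ ℤ^P| = Σ_{S ⊆ P} Ω°_{(S,⪯₊)}(k) · Ω_{(P∖S,⪯₋)}(k+1), where the sum is over all subsets S of P with the induced orders, and Ω°_∅(k) = Ω_∅(k) = 1 by convention. -/

import Mathlib

open Set Pointwise

/-- The chain polytope of a finite poset `(P, le)`: nonnegative functions whose sums
over chains are at most `1`. -/
def chainPoly (P : Type*) [Fintype P] (le : P → P → Prop) : Set (P → ℝ) :=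
  {g | (∀ a, 0 ≤ g a) ∧
    ∀ C : Finset P, (∀ a ∈ C, ∀ b ∈ C, le a b ∨ le b a) → ∑ a ∈ C, g a ≤ 1}

/-- The lattice points of `S ⊆ ℝ^P`, as a set of integer vectors. -/
def intPoints {P : Type*} (S : Set (P → ℝ)) : Set (P → ℤ) :=
  {m | (fun a => (m a : ℝ)) ∈ S}

/-- The order polynomial `Ω_{(S,le)}(k)`: the number of order-preserving maps from the
subposet induced on `S ⊆ P` to the `k`-chain. -/
noncomputable def orderPolynomial {P : Type*} (le : P → P → Prop) (S : Finset P) (k : ℕ) : ℕ :=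
  Nat.card {φ : {a // a ∈ S} → Fin k //
    ∀ a b : {a // a ∈ S}, le a.1 b.1 → φ a ≤ φ b}

/-- The strict order polynomial `Ω°_{(S,le)}(k)`: the number of strictly
order-preserving maps from the subposet induced on `S ⊆ P` to the `k`-chain. -/
noncomputable def strictOrderPolynomial {P : Type*} (le : P → P → Prop) (S : Finset P) (k : ℕ) : ℕ :=
  Nat.card {φ : {a // a ∈ S} → Fin k //
    ∀ a b : {a // a ∈ S}, le a.1 b.1 → a.1 ≠ b.1 → φ a < φ b}

set_option maxHeartbeats 1000000
set_option linter.unusedSectionVars false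
set_option linter.unusedTactic false

section Transfer

variable {Q : Type*} [Fintype Q] (le : Q → Q → Prop)

open Classical in
/-- chains containing `a` with all elements below `a` -/
noncomputable def chainsTo (a : Q) : Finset (Finset Q) :=
  Finset.univ.powerset.filter
    (fun C => (∀ x ∈ C, ∀ y ∈ C, le x y ∨ le y x) ∧ a ∈ C ∧ ∀ c ∈ C, le c a)

open Classical in
noncomputable def below (a : Q) : Finset Q :=
  Finset.univ.filter (fun b => le b a ∧ b ≠ a)

noncomputable def hgt (g : Q → ℕ) (a : Q) : ℕ :=
  (chainsTo le a).sup (fun C => ∑ c ∈ C, g c)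

lemma mem_chainsTo {a : Q} {C : Finset Q} :
    C ∈ chainsTo le a ↔
      (∀ x ∈ C, ∀ y ∈ C, le x y ∨ le y x) ∧ a ∈ C ∧ ∀ c ∈ C, le c a := by
  classical
  simp [chainsTo]

lemma mem_below {a b : Q} : b ∈ below le a ↔ le b a ∧ b ≠ a := by
  classical
  simp [below]

variable (hle : IsPartialOrder Q le)
include hle

lemma singleton_mem_chainsTo (a : Q) : ({a} : Finset Q) ∈ chainsTo le a := by
  rw [mem_chainsTo]
  refine ⟨?_, Finset.mem_singleton_self a, ?_⟩
  · intro x hx y hy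
    simp only [Finset.mem_singleton] at hx hy
    rw [hx, hy]
    exact Or.inl (hle.refl a)
  · intro c hc
    simp only [Finset.mem_singleton] at hc
    rw [hc]
    exact hle.refl a

lemma exists_top :
    ∀ C : Finset Q, (∀ x ∈ C, ∀ y ∈ C, le x y ∨ le y x) → C.Nonempty →
      ∃ t ∈ C, ∀ c ∈ C, le c t := by
  classical
  intro C
  induction C using Finset.induction_on with
  | empty => simp
  | @insert a C' ha ih =>
    intro hC _
    by_cases hC' : C'.Nonempty
    · obtain ⟨t, htC, htop⟩ := ih
        (fun x hx y hy => hC x (Finset.mem_insert_of_mem hx) y (Finset.mem_insert_of_mem hy)) hC'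
      rcases hC a (Finset.mem_insert_self _ _) t (Finset.mem_insert_of_mem htC) with h | h
      · refine ⟨t, Finset.mem_insert_of_mem htC, fun c hc => ?_⟩
        rcases Finset.mem_insert.1 hc with rfl | hc
        · exact h
        · exact htop c hc
      · refine ⟨a, Finset.mem_insert_self _ _, fun c hc => ?_⟩
        rcases Finset.mem_insert.1 hc with rfl | hc
        · exact hle.refl c
        · exact hle.trans _ _ _ (htop c hc) h
    · rw [Finset.not_nonempty_iff_eq_empty] at hC'
      subst hC'
      refine ⟨a, Finset.mem_insert_self _ _, fun c hc => ?_⟩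
      simp only [Finset.mem_insert, Finset.notMem_empty, or_false] at hc
      subst hc
      exact hle.refl c

lemma le_hgt (g : Q → ℕ) (a : Q) : g a ≤ hgt le g a := by
  have h := Finset.le_sup (f := fun C => ∑ c ∈ C, g c) (singleton_mem_chainsTo le hle a)
  simp only [Finset.sum_singleton] at h
  exact h

omit hle in
lemma hgt_le (g : Q → ℕ) {k : ℕ}
    (h : ∀ C : Finset Q, (∀ x ∈ C, ∀ y ∈ C, le x y ∨ le y x) → ∑ c ∈ C, g c ≤ k)
    (a : Q) : hgt le g a ≤ k :=
  Finset.sup_le fun C hC => h C ((mem_chainsTo le).1 hC).1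

omit hle in
lemma sum_le_hgt (g : Q → ℕ) {C : Finset Q}
    (hC : ∀ x ∈ C, ∀ y ∈ C, le x y ∨ le y x) {t : Q} (ht : t ∈ C)
    (htop : ∀ c ∈ C, le c t) : ∑ c ∈ C, g c ≤ hgt le g t :=
  Finset.le_sup (f := fun C => ∑ c ∈ C, g c) ((mem_chainsTo le).2 ⟨hC, ht, htop⟩)

lemma hgt_add_le (g : Q → ℕ) {a b : Q} (hab : le a b) (hne : a ≠ b) :
    hgt le g a + g b ≤ hgt le g b := by
  classical
  have hne' : (chainsTo le a).Nonempty := ⟨{a}, singleton_mem_chainsTo le hle a⟩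
  obtain ⟨C, hCmem, hCeq⟩ := Finset.exists_mem_eq_sup _ hne' (fun C => ∑ c ∈ C, g c)
  obtain ⟨hCchain, haC, hCle⟩ := (mem_chainsTo le).1 hCmem
  have hbC : b ∉ C := fun hb => hne (hle.antisymm _ _ hab (hCle b hb))
  have hmem : insert b C ∈ chainsTo le b := by
    refine (mem_chainsTo le).2 ⟨?_, Finset.mem_insert_self _ _, ?_⟩
    · intro x hx y hy
      rcases Finset.mem_insert.1 hx with hx | hx
      · rcases Finset.mem_insert.1 hy with hy | hy
        · rw [hx, hy]; exact Or.inl (hle.refl b)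
        · rw [hx]; exact Or.inr (hle.trans _ _ _ (hCle y hy) hab)
      · rcases Finset.mem_insert.1 hy with hy | hy
        · rw [hy]; exact Or.inl (hle.trans _ _ _ (hCle x hx) hab)
        · exact hCchain x hx y hy
    · intro c hc
      rcases Finset.mem_insert.1 hc with rfl | hc
      · exact hle.refl c
      · exact hle.trans _ _ _ (hCle c hc) hab
  have h2 := Finset.le_sup (f := fun C => ∑ c ∈ C, g c) hmem
  have h2' : g b + ∑ c ∈ C, g c ≤ (chainsTo le b).sup fun C => ∑ c ∈ C, g c := by
    simpa [Finset.sum_insert hbC] using h2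
  unfold hgt at *
  omega

lemma hgt_eq (g : Q → ℕ) (a : Q) :
    hgt le g a = g a + (below le a).sup (hgt le g) := by
  classical
  apply le_antisymm
  · refine Finset.sup_le fun C hC => ?_
    obtain ⟨hCchain, haC, hCle⟩ := (mem_chainsTo le).1 hC
    rw [← Finset.add_sum_erase _ _ haC]
    by_cases he : (C.erase a).Nonempty
    · obtain ⟨t, htC, htop⟩ := exists_top le hle (C.erase a)
        (fun x hx y hy => hCchain x (Finset.mem_of_mem_erase hx) y (Finset.mem_of_mem_erase hy))
        he
      have h1 : ∑ c ∈ C.erase a, g c ≤ hgt le g t :=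
        sum_le_hgt le g
          (fun x hx y hy => hCchain x (Finset.mem_of_mem_erase hx) y (Finset.mem_of_mem_erase hy))
          htC htop
      have h2 : hgt le g t ≤ (below le a).sup (hgt le g) := by
        refine Finset.le_sup ((mem_below le).2 ⟨?_, ?_⟩)
        · exact hCle t (Finset.mem_of_mem_erase htC)
        · exact Finset.ne_of_mem_erase htC
      omega
    · rw [Finset.not_nonempty_iff_eq_empty] at he
      rw [he]
      simp
  · by_cases hb : (below le a).Nonempty
    · obtain ⟨b, hbmem, hbeq⟩ := Finset.exists_mem_eq_sup _ hb (hgt le g)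
      obtain ⟨hba, hne⟩ := (mem_below le).1 hbmem
      have := hgt_add_le le hle g hba hne
      omega
    · rw [Finset.not_nonempty_iff_eq_empty] at hb
      rw [hb]
      simpa using le_hgt le hle g a

omit hle in
lemma wfSlt (hle' : IsPartialOrder Q le) : WellFounded (fun a b : Q => le a b ∧ a ≠ b) := by
  haveI : IsTrans Q (fun a b : Q => le a b ∧ a ≠ b) := by
    constructor
    intro a b c hab hbc
    refine ⟨hle'.trans _ _ _ hab.1 hbc.1, fun h => ?_⟩
    subst h
    exact hab.2 (hle'.antisymm _ _ hab.1 hbc.1)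
  haveI : IsIrrefl Q (fun a b : Q => le a b ∧ a ≠ b) := ⟨fun a h => h.2 rfl⟩
  exact Finite.wellFounded_of_trans_of_irrefl _

lemma hgt_transfer (ψ : Q → ℕ) (hmono : ∀ a b, le a b → a ≠ b → ψ a ≤ ψ b) (a : Q) :
    hgt le (fun x => ψ x - (below le x).sup ψ) a = ψ a := by
  refine (wfSlt le hle).induction (C := fun a => hgt le (fun x => ψ x - (below le x).sup ψ) a = ψ a) a (fun x ih => ?_)
  show hgt le (fun x => ψ x - (below le x).sup ψ) x = ψ x
  rw [hgt_eq le hle]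
  have hsup : (below le x).sup (hgt le (fun x => ψ x - (below le x).sup ψ))
      = (below le x).sup ψ :=
    Finset.sup_congr rfl (fun b hb => ih b ((mem_below le).1 hb))
  rw [hsup]
  have hle1 : (below le x).sup ψ ≤ ψ x :=
    Finset.sup_le fun b hb => hmono b x ((mem_below le).1 hb).1 ((mem_below le).1 hb).2
  omega

/-- Transfer bijection, weak version. -/
noncomputable def weakEquiv (k : ℕ) :
    {g : Q → ℕ // ∀ C : Finset Q, (∀ x ∈ C, ∀ y ∈ C, le x y ∨ le y x) → ∑ c ∈ C, g c ≤ k}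
      ≃ {ψ : Q → Fin (k + 1) // ∀ a b, le a b → ψ a ≤ ψ b} where
  toFun g := ⟨fun a => ⟨hgt le g.1 a, Nat.lt_succ_of_le (hgt_le le g.1 g.2 a)⟩, by
    intro a b hab
    by_cases h : a = b
    · subst h; exact le_refl _
    · exact Fin.mk_le_mk.2 (le_trans (Nat.le_add_right _ _) (hgt_add_le le hle g.1 hab h))⟩
  invFun ψ := ⟨fun a => (ψ.1 a : ℕ) - (below le a).sup (fun b => (ψ.1 b : ℕ)), by
    classical
    intro C hC
    have hkey : ∀ a, hgt le (fun x => (ψ.1 x : ℕ) - (below le x).sup (fun b => (ψ.1 b : ℕ))) a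
        = (ψ.1 a : ℕ) :=
      hgt_transfer le hle _ (fun a b hab _ => ψ.2 a b hab)
    rcases C.eq_empty_or_nonempty with rfl | hne
    · simp
    · obtain ⟨t, htC, htop⟩ := exists_top le hle C hC hne
      calc ∑ c ∈ C, ((ψ.1 c : ℕ) - (below le c).sup (fun b => (ψ.1 b : ℕ)))
          ≤ hgt le _ t := sum_le_hgt le _ hC htC htop
        _ = (ψ.1 t : ℕ) := hkey t
        _ ≤ k := Nat.lt_succ_iff.1 (ψ.1 t).isLt⟩
  left_inv g := by
    refine Subtype.ext (funext fun a => ?_)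
    show hgt le g.1 a - (below le a).sup (fun b => hgt le g.1 b) = g.1 a
    have := hgt_eq le hle g.1 a
    have h2 : (below le a).sup (fun b => hgt le g.1 b) = (below le a).sup (hgt le g.1) := rfl
    omega
  right_inv ψ := by
    refine Subtype.ext (funext fun a => ?_)
    exact Fin.ext (hgt_transfer le hle _ (fun a b hab _ => ψ.2 a b hab) a)

/-- Transfer bijection, strict version. -/
noncomputable def strictEquiv (k : ℕ) :
    {g : Q → ℕ // (∀ a, 1 ≤ g a) ∧
        ∀ C : Finset Q, (∀ x ∈ C, ∀ y ∈ C, le x y ∨ le y x) → ∑ c ∈ C, g c ≤ k}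
      ≃ {φ : Q → Fin k // ∀ a b, le a b → a ≠ b → φ a < φ b} where
  toFun g := ⟨fun a => ⟨hgt le g.1 a - 1, by
      have h1 := le_hgt le hle g.1 a
      have h2 := hgt_le le g.1 g.2.2 a
      have h3 := g.2.1 a
      omega⟩, by
    intro a b hab hne
    have h1 := hgt_add_le le hle g.1 hab hne
    have h2 := g.2.1 b
    have h3 := le_hgt le hle g.1 a
    have h4 := g.2.1 a
    exact Fin.mk_lt_mk.2 (by omega)⟩
  invFun φ := by
    classical
    refine ⟨fun a => ((φ.1 a : ℕ) + 1) - (below le a).sup (fun b => (φ.1 b : ℕ) + 1), ?_, ?_⟩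
    · intro a
      have hsup : (below le a).sup (fun b => (φ.1 b : ℕ) + 1) ≤ (φ.1 a : ℕ) :=
        Finset.sup_le fun b hb =>
          Nat.succ_le_of_lt (φ.2 b a ((mem_below le).1 hb).1 ((mem_below le).1 hb).2)
      show 1 ≤ ((φ.1 a : ℕ) + 1) - (below le a).sup (fun b => (φ.1 b : ℕ) + 1)
      omega
    · intro C hC
      have hkey : ∀ a,
          hgt le (fun x => ((φ.1 x : ℕ) + 1) - (below le x).sup (fun b => (φ.1 b : ℕ) + 1)) a
          = (φ.1 a : ℕ) + 1 := by
        intro a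
        have := hgt_transfer le hle (fun x => (φ.1 x : ℕ) + 1)
          (fun a b hab hne => Nat.succ_le_succ (le_of_lt (φ.2 a b hab hne))) a
        exact this
      rcases C.eq_empty_or_nonempty with rfl | hne
      · simp
      · obtain ⟨t, htC, htop⟩ := exists_top le hle C hC hne
        calc ∑ c ∈ C, (((φ.1 c : ℕ) + 1) - (below le c).sup (fun b => (φ.1 b : ℕ) + 1))
            ≤ hgt le _ t := sum_le_hgt le _ hC htC htop
          _ = (φ.1 t : ℕ) + 1 := hkey t
          _ ≤ k := (φ.1 t).isLt
  left_inv g := by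
    refine Subtype.ext (funext fun a => ?_)
    show ((hgt le g.1 a - 1) + 1) - (below le a).sup (fun b => (hgt le g.1 b - 1) + 1) = g.1 a
    have h1 : ∀ b, (hgt le g.1 b - 1) + 1 = hgt le g.1 b := fun b => by
      have := le_trans (g.2.1 b) (le_hgt le hle g.1 b)
      omega
    have hsup : (below le a).sup (fun b => (hgt le g.1 b - 1) + 1)
        = (below le a).sup (hgt le g.1) :=
      Finset.sup_congr rfl (fun b _ => h1 b)
    rw [h1 a, hsup]
    have := hgt_eq le hle g.1 a
    omega
  right_inv φ := by
    refine Subtype.ext (funext fun a => ?_)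
    refine Fin.ext ?_
    show hgt le (fun x => ((φ.1 x : ℕ) + 1) - (below le x).sup (fun b => (φ.1 b : ℕ) + 1)) a - 1
        = (φ.1 a : ℕ)
    have := hgt_transfer le hle (fun x => (φ.1 x : ℕ) + 1)
      (fun a b hab hne => Nat.succ_le_succ (le_of_lt (φ.2 a b hab hne))) a
    omega

end Transfer

section Main

lemma subPO {P : Type*} {le : P → P → Prop} (h : IsPartialOrder P le) (p : P → Prop) :
    IsPartialOrder {x // p x} (fun a b => le a.1 b.1) where
  refl a := h.refl a.1
  trans a b c hab hbc := h.trans _ _ _ hab hbc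
  antisymm a b hab hba := Subtype.ext (h.antisymm _ _ hab hba)

lemma intPoints_eq (P : Type*) [Fintype P] (lep lem : P → P → Prop)
    (hp : IsPartialOrder P lep) (hm : IsPartialOrder P lem) (k : ℕ) :
    intPoints ((k : ℝ) • (chainPoly P lep - chainPoly P lem)) =
      {m : P → ℤ |
        (∀ C : Finset P, (∀ x ∈ C, ∀ y ∈ C, lep x y ∨ lep y x) →
          ∑ a ∈ C, (m a).toNat ≤ k) ∧
        (∀ C : Finset P, (∀ x ∈ C, ∀ y ∈ C, lem x y ∨ lem y x) →
          ∑ a ∈ C, (-(m a)).toNat ≤ k)} := by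
  have h0p : (0 : P → ℝ) ∈ chainPoly P lep := by
    constructor
    · intro a; exact le_refl _
    · intro C _; simp
  have h0m : (0 : P → ℝ) ∈ chainPoly P lem := by
    constructor
    · intro a; exact le_refl _
    · intro C _; simp
  ext m
  simp only [intPoints, Set.mem_setOf_eq]
  constructor
  · intro h
    rw [Set.mem_smul_set] at h
    obtain ⟨x, hx, hxm⟩ := h
    rw [Set.mem_sub] at hx
    obtain ⟨u, hu, v, hv, huv⟩ := hx
    have hma : ∀ a, (m a : ℝ) = k * (u a - v a) := by
      intro a
      have := congrFun hxm a
      rw [← this, ← huv]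
      simp [smul_eq_mul]
    constructor
    · intro C hC
      have key : ∀ a, (((m a).toNat : ℤ) : ℝ) ≤ k * u a := by
        intro a
        have h1 : ((m a).toNat : ℤ) = max (m a) 0 := Int.toNat_eq_max (m a)
        rw [h1]
        push_cast
        have h2 : (m a : ℝ) ≤ k * u a := by
          rw [hma a]
          have : (0:ℝ) ≤ (k:ℝ) * v a := mul_nonneg (by positivity) (hv.1 a)
          nlinarith
        have h3 : (0:ℝ) ≤ k * u a := mul_nonneg (by positivity) (hu.1 a)
        exact max_le h2 h3
      have hsum : ((∑ a ∈ C, (m a).toNat : ℕ) : ℝ) ≤ k * ∑ a ∈ C, u a := by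
        push_cast
        rw [Finset.mul_sum]
        refine Finset.sum_le_sum fun a _ => ?_
        exact_mod_cast key a
      have hsum2 : (k:ℝ) * ∑ a ∈ C, u a ≤ k := by
        have := hu.2 C hC
        nlinarith [this, (Nat.cast_nonneg k : (0:ℝ) ≤ k)]
      exact_mod_cast le_trans hsum hsum2
    · intro C hC
      have key : ∀ a, (((-(m a)).toNat : ℤ) : ℝ) ≤ k * v a := by
        intro a
        have h1 : ((-(m a)).toNat : ℤ) = max (-(m a)) 0 := Int.toNat_eq_max _
        rw [h1]
        push_cast
        have h2 : (-(m a) : ℝ) ≤ k * v a := by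
          rw [hma a]
          have : (0:ℝ) ≤ (k:ℝ) * u a := mul_nonneg (by positivity) (hu.1 a)
          nlinarith
        have h3 : (0:ℝ) ≤ k * v a := mul_nonneg (by positivity) (hv.1 a)
        exact max_le h2 h3
      have hsum : ((∑ a ∈ C, (-(m a)).toNat : ℕ) : ℝ) ≤ k * ∑ a ∈ C, v a := by
        push_cast
        rw [Finset.mul_sum]
        refine Finset.sum_le_sum fun a _ => ?_
        exact_mod_cast key a
      have hsum2 : (k:ℝ) * ∑ a ∈ C, v a ≤ k := by
        have := hv.2 C hC
        nlinarith [this, (Nat.cast_nonneg k : (0:ℝ) ≤ k)]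
      exact_mod_cast le_trans hsum hsum2
  · rintro ⟨h1, h2⟩
    have hsingp : ∀ a : P, ({a} : Finset P) ∈
        {C : Finset P | ∀ x ∈ C, ∀ y ∈ C, lep x y ∨ lep y x} := by
      intro a x hx y hy
      simp only [Finset.mem_singleton] at hx hy
      rw [hx, hy]; exact Or.inl (hp.refl a)
    by_cases hk : k = 0
    · subst hk
      have hm0 : ∀ a, m a = 0 := by
        intro a
        have ha1 := h1 {a} (by
          intro x hx y hy
          simp only [Finset.mem_singleton] at hx hy
          rw [hx, hy]; exact Or.inl (hp.refl a))
        have ha2 := h2 {a} (by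
          intro x hx y hy
          simp only [Finset.mem_singleton] at hx hy
          rw [hx, hy]; exact Or.inl (hm.refl a))
        simp only [Finset.sum_singleton, Nat.le_zero, Int.toNat_eq_zero] at ha1 ha2
        omega
      rw [Set.mem_smul_set]
      refine ⟨0, ?_, ?_⟩
      · rw [Set.mem_sub]
        exact ⟨0, h0p, 0, h0m, by simp⟩
      · funext a
        simp [hm0 a]
    · have hkpos : (0:ℝ) < k := by positivity
      rw [Set.mem_smul_set]
      refine ⟨(fun a => ((m a).toNat : ℝ) / k) - (fun a => (((-(m a)).toNat : ℕ) : ℝ) / k),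
        ?_, ?_⟩
      · rw [Set.mem_sub]
        refine ⟨_, ⟨?_, ?_⟩, _, ⟨?_, ?_⟩, rfl⟩
        · intro a; positivity
        · intro C hC
          rw [← Finset.sum_div, div_le_one hkpos]
          have := h1 C hC
          push_cast
          exact_mod_cast this
        · intro a; positivity
        · intro C hC
          rw [← Finset.sum_div, div_le_one hkpos]
          have := h2 C hC
          exact_mod_cast this
      · funext a
        simp only [Pi.smul_apply, Pi.sub_apply, smul_eq_mul]
        rw [mul_sub, mul_div_cancel₀ _ (ne_of_gt hkpos), mul_div_cancel₀ _ (ne_of_gt hkpos)]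
        have hz : ((m a).toNat : ℤ) - ((-(m a)).toNat : ℤ) = m a := by omega
        exact_mod_cast congrArg (fun z : ℤ => (z : ℝ)) hz

end Main

section Fiber

variable {P : Type*} [Fintype P] [DecidableEq P] (lep lem : P → P → Prop) (k : ℕ) (S : Finset P)

noncomputable def fiberEquiv :
    {m : P → ℤ //
      ((∀ C : Finset P, (∀ x ∈ C, ∀ y ∈ C, lep x y ∨ lep y x) →
          ∑ a ∈ C, (m a).toNat ≤ k) ∧
       (∀ C : Finset P, (∀ x ∈ C, ∀ y ∈ C, lem x y ∨ lem y x) →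
          ∑ a ∈ C, (-(m a)).toNat ≤ k)) ∧
      Finset.univ.filter (fun a => 0 < m a) = S} ≃
    ({g : {a // a ∈ S} → ℕ // (∀ a, 1 ≤ g a) ∧
        ∀ C : Finset {a // a ∈ S},
          (∀ x ∈ C, ∀ y ∈ C, lep x.1 y.1 ∨ lep y.1 x.1) → ∑ c ∈ C, g c ≤ k} ×
     {g : {a // a ∈ Sᶜ} → ℕ //
        ∀ C : Finset {a // a ∈ Sᶜ},
          (∀ x ∈ C, ∀ y ∈ C, lem x.1 y.1 ∨ lem y.1 x.1) → ∑ c ∈ C, g c ≤ k}) where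
  toFun m :=
    (⟨fun a => (m.1 a.1).toNat, by
      constructor
      · intro a
        have ha : a.1 ∈ Finset.univ.filter (fun x => 0 < m.1 x) := by
          rw [m.2.2]; exact a.2
        have h2 := (Finset.mem_filter.1 ha).2
        show 1 ≤ (m.1 a.1).toNat
        omega
      · intro C hC
        have hsum : ∑ c ∈ C, (m.1 c.1).toNat
            = ∑ a ∈ C.map (Function.Embedding.subtype _), (m.1 a).toNat :=
          (Finset.sum_map C (Function.Embedding.subtype _) (fun a => (m.1 a).toNat)).symm
        rw [hsum]
        refine m.2.1.1 _ ?_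
        intro x hx y hy
        obtain ⟨x', hx', rfl⟩ := Finset.mem_map.1 hx
        obtain ⟨y', hy', rfl⟩ := Finset.mem_map.1 hy
        exact hC x' hx' y' hy'⟩,
     ⟨fun a => (-(m.1 a.1)).toNat, by
        intro C hC
        have hsum : ∑ c ∈ C, (-(m.1 c.1)).toNat
            = ∑ a ∈ C.map (Function.Embedding.subtype _), (-(m.1 a)).toNat :=
          (Finset.sum_map C (Function.Embedding.subtype _) (fun a => (-(m.1 a)).toNat)).symm
        rw [hsum]
        refine m.2.1.2 _ ?_
        intro x hx y hy
        obtain ⟨x', hx', rfl⟩ := Finset.mem_map.1 hx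
        obtain ⟨y', hy', rfl⟩ := Finset.mem_map.1 hy
        exact hC x' hx' y' hy'⟩)
  invFun fg := ⟨fun a => if h : a ∈ S then (fg.1.1 ⟨a, h⟩ : ℤ)
      else -(fg.2.1 ⟨a, Finset.mem_compl.2 h⟩ : ℤ), by
    constructor
    · constructor
      · intro C hC
        have step1 : ∑ a ∈ C, ((if h : a ∈ S then (fg.1.1 ⟨a, h⟩ : ℤ)
              else -(fg.2.1 ⟨a, Finset.mem_compl.2 h⟩ : ℤ)).toNat)
            = ∑ a ∈ C.filter (· ∈ S), ((if h : a ∈ S then (fg.1.1 ⟨a, h⟩ : ℤ)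
              else -(fg.2.1 ⟨a, Finset.mem_compl.2 h⟩ : ℤ)).toNat) := by
          refine (Finset.sum_subset (Finset.filter_subset _ _) ?_).symm
          intro x hx hnx
          have hxS : x ∉ S := fun hxS => hnx (Finset.mem_filter.2 ⟨hx, hxS⟩)
          rw [dif_neg hxS]
          exact Int.toNat_of_nonpos (neg_nonpos.2 (Int.natCast_nonneg _))
        have step2 : ∑ a ∈ C.filter (· ∈ S), ((if h : a ∈ S then (fg.1.1 ⟨a, h⟩ : ℤ)
              else -(fg.2.1 ⟨a, Finset.mem_compl.2 h⟩ : ℤ)).toNat)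
            = ∑ x ∈ C.subtype (· ∈ S), ((if h : x.1 ∈ S then (fg.1.1 ⟨x.1, h⟩ : ℤ)
              else -(fg.2.1 ⟨x.1, Finset.mem_compl.2 h⟩ : ℤ)).toNat) :=
          (Finset.sum_subtype_eq_sum_filter _).symm
        have step3 : ∑ x ∈ C.subtype (· ∈ S), ((if h : x.1 ∈ S then (fg.1.1 ⟨x.1, h⟩ : ℤ)
              else -(fg.2.1 ⟨x.1, Finset.mem_compl.2 h⟩ : ℤ)).toNat)
            = ∑ x ∈ C.subtype (· ∈ S), fg.1.1 x := by
          refine Finset.sum_congr rfl fun x _ => ?_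
          rw [dif_pos x.2]
          simp
        rw [step1, step2, step3]
        refine fg.1.2.2 _ ?_
        intro x hx y hy
        exact hC x.1 (Finset.mem_subtype.1 hx) y.1 (Finset.mem_subtype.1 hy)
      · intro C hC
        have step1 : ∑ a ∈ C, ((-(if h : a ∈ S then (fg.1.1 ⟨a, h⟩ : ℤ)
              else -(fg.2.1 ⟨a, Finset.mem_compl.2 h⟩ : ℤ))).toNat)
            = ∑ a ∈ C.filter (· ∈ Sᶜ), ((-(if h : a ∈ S then (fg.1.1 ⟨a, h⟩ : ℤ)
              else -(fg.2.1 ⟨a, Finset.mem_compl.2 h⟩ : ℤ))).toNat) := by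
          refine (Finset.sum_subset (Finset.filter_subset _ _) ?_).symm
          intro x hx hnx
          have hxS : x ∈ S := by
            by_contra hxS
            exact hnx (Finset.mem_filter.2 ⟨hx, Finset.mem_compl.2 hxS⟩)
          rw [dif_pos hxS]
          exact Int.toNat_of_nonpos (neg_nonpos.2 (Int.natCast_nonneg _))
        have step2 : ∑ a ∈ C.filter (· ∈ Sᶜ), ((-(if h : a ∈ S then (fg.1.1 ⟨a, h⟩ : ℤ)
              else -(fg.2.1 ⟨a, Finset.mem_compl.2 h⟩ : ℤ))).toNat)
            = ∑ x ∈ C.subtype (· ∈ Sᶜ), ((-(if h : x.1 ∈ S then (fg.1.1 ⟨x.1, h⟩ : ℤ)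
              else -(fg.2.1 ⟨x.1, Finset.mem_compl.2 h⟩ : ℤ))).toNat) :=
          (Finset.sum_subtype_eq_sum_filter _).symm
        have step3 : ∑ x ∈ C.subtype (· ∈ Sᶜ), ((-(if h : x.1 ∈ S then (fg.1.1 ⟨x.1, h⟩ : ℤ)
              else -(fg.2.1 ⟨x.1, Finset.mem_compl.2 h⟩ : ℤ))).toNat)
            = ∑ x ∈ C.subtype (· ∈ Sᶜ), fg.2.1 x := by
          refine Finset.sum_congr rfl fun x _ => ?_
          have hxS : x.1 ∉ S := Finset.mem_compl.1 x.2
          rw [dif_neg hxS]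
          have : (⟨x.1, Finset.mem_compl.2 hxS⟩ : {a // a ∈ Sᶜ}) = x := Subtype.ext rfl
          rw [this]
          simp
        rw [step1, step2, step3]
        refine fg.2.2 _ ?_
        intro x hx y hy
        exact hC x.1 (Finset.mem_subtype.1 hx) y.1 (Finset.mem_subtype.1 hy)
    · ext a
      simp only [Finset.mem_filter, Finset.mem_univ, true_and]
      constructor
      · intro ha
        by_contra haS
        rw [dif_neg haS] at ha
        have : (0:ℤ) ≤ (fg.2.1 ⟨a, Finset.mem_compl.2 haS⟩ : ℤ) := by positivity
        omega
      · intro ha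
        rw [dif_pos ha]
        exact_mod_cast fg.1.2.1 ⟨a, ha⟩⟩
  left_inv m := by
    refine Subtype.ext (funext fun a => ?_)
    show (if h : a ∈ S then (((m.1 a).toNat : ℕ) : ℤ)
        else -(((-(m.1 a)).toNat : ℕ) : ℤ)) = m.1 a
    by_cases h : a ∈ S
    · rw [dif_pos h]
      have ha : a ∈ Finset.univ.filter (fun x => 0 < m.1 x) := by rw [m.2.2]; exact h
      have := (Finset.mem_filter.1 ha).2
      exact Int.toNat_of_nonneg (le_of_lt this)
    · rw [dif_neg h]
      have ha : a ∉ Finset.univ.filter (fun x => 0 < m.1 x) := by rw [m.2.2]; exact h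
      have h2 : ¬ (0 < m.1 a) := fun hlt => ha (Finset.mem_filter.2 ⟨Finset.mem_univ a, hlt⟩)
      have h3 : (((-(m.1 a)).toNat : ℤ)) = -(m.1 a) := Int.toNat_of_nonneg (by omega)
      omega
  right_inv fg := by
    obtain ⟨⟨f, hf⟩, ⟨g, hg⟩⟩ := fg
    refine Prod.ext ?_ ?_
    · refine Subtype.ext (funext fun a => ?_)
      obtain ⟨a, ha⟩ := a
      show (if h : a ∈ S then (f ⟨a, h⟩ : ℤ)
          else -(g ⟨a, Finset.mem_compl.2 h⟩ : ℤ)).toNat = f ⟨a, ha⟩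
      rw [dif_pos ha]
      exact Int.toNat_natCast _
    · refine Subtype.ext (funext fun a => ?_)
      obtain ⟨a, ha⟩ := a
      have haS : a ∉ S := Finset.mem_compl.1 ha
      show (-(if h : a ∈ S then (f ⟨a, h⟩ : ℤ)
          else -(g ⟨a, Finset.mem_compl.2 h⟩ : ℤ))).toNat = g ⟨a, ha⟩
      rw [dif_neg haS, neg_neg]
      exact Int.toNat_natCast _

end Fiber

/-- For any double poset and `k ≥ 0`,
`|k·(C(P,⪯₊) − C(P,⪯₋)) ∩ ℤ^P| = ∑_{S ⊆ P} Ω°_{(S,⪯₊)}(k) · Ω_{(P∖S,⪯₋)}(k+1)`. -/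
theorem lattice_points_reduced_doubleChainPoly
    (P : Type*) [Fintype P] [DecidableEq P] (lep lem : P → P → Prop)
    (hp : IsPartialOrder P lep) (hm : IsPartialOrder P lem) (k : ℕ) :
    (intPoints ((k : ℝ) • (chainPoly P lep - chainPoly P lem))).ncard =
      ∑ S : Finset P,
        strictOrderPolynomial lep S k * orderPolynomial lem Sᶜ (k + 1) := by
  classical
  rw [← Nat.card_coe_set_eq, intPoints_eq P lep lem hp hm k]
  set M : Set (P → ℤ) := {m : P → ℤ |
        (∀ C : Finset P, (∀ x ∈ C, ∀ y ∈ C, lep x y ∨ lep y x) →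
          ∑ a ∈ C, (m a).toNat ≤ k) ∧
        (∀ C : Finset P, (∀ x ∈ C, ∀ y ∈ C, lem x y ∨ lem y x) →
          ∑ a ∈ C, (-(m a)).toNat ≤ k)} with hM
  let F : ↥M → Finset P := fun m => Finset.univ.filter (fun a => 0 < m.1 a)
  have eqv : ∀ S : Finset P, {x : ↥M // F x = S} ≃
      ({φ : {a // a ∈ S} → Fin k //
          ∀ a b : {a // a ∈ S}, lep a.1 b.1 → a ≠ b → φ a < φ b} ×
       {ψ : {a // a ∈ Sᶜ} → Fin (k + 1) //
          ∀ a b : {a // a ∈ Sᶜ}, lem a.1 b.1 → ψ a ≤ ψ b}) := by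
    intro S
    refine Equiv.trans (Equiv.subtypeSubtypeEquivSubtypeInter (· ∈ M)
      (fun m => Finset.univ.filter (fun a => 0 < m a) = S)) ?_
    refine Equiv.trans (fiberEquiv lep lem k S) ?_
    exact Equiv.prodCongr
      (strictEquiv (fun a b : {a // a ∈ S} => lep a.1 b.1) (subPO hp _) k)
      (weakEquiv (fun a b : {a // a ∈ Sᶜ} => lem a.1 b.1) (subPO hm _) k)
  haveI : ∀ S : Finset P, Finite {x : ↥M // F x = S} := fun S =>
    Finite.of_equiv _ (eqv S).symm
  letI : ∀ S : Finset P, Fintype {x : ↥M // F x = S} := fun S => Fintype.ofFinite _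
  have hcard : ∀ S : Finset P, Nat.card {x : ↥M // F x = S} =
      strictOrderPolynomial lep S k * orderPolynomial lem Sᶜ (k + 1) := by
    intro S
    rw [Nat.card_congr (eqv S), Nat.card_prod]
    congr 1
    · exact Nat.card_congr (Equiv.subtypeEquivRight (fun φ =>
        ⟨fun h a b hab hne => h a b hab (fun he => hne (congrArg Subtype.val he)),
         fun h a b hab hne => h a b hab (fun he => hne (Subtype.ext he))⟩))
  calc Nat.card ↥M = Nat.card (Σ S : Finset P, {x : ↥M // F x = S}) :=
        Nat.card_congr (Equiv.sigmaFiberEquiv F).symm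
    _ = Fintype.card (Σ S : Finset P, {x : ↥M // F x = S}) := Nat.card_eq_fintype_card
    _ = ∑ S : Finset P, Fintype.card {x : ↥M // F x = S} := Fintype.card_sigma
    _ = ∑ S : Finset P, Nat.card {x : ↥M // F x = S} := by
        refine Finset.sum_congr rfl fun S _ => Nat.card_eq_fintype_card.symm
    _ = ∑ S : Finset P, strictOrderPolynomial lep S k * orderPolynomial lem Sᶜ (k + 1) :=
        Finset.sum_congr rfl fun S _ => hcard S
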